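/- Let f : [0,1] → ℝ be continuous. Then a point x ∈ (0,1) lies outside the set D_f (points of no local C² arc-length parametrization) if and only if there is an open interval (c,d) ∋ x on which f is strictly monotone; moreover for real-valued f, D_f = K_f ∪ E_f, where K_f is the set of points of varying monotonicity (complement of the union of maximal intervals of constancy or strict monotonicity) and E_f is the maximal open set on which f is locally constant. -/

import Mathlib

open MeasureTheory
open Set Topology

/-- `g` restricted to `[c,d]` admits a `C²` arc-length parametrization. -/
def HasC2ArcLengthParam (g : ℝ → ℝ) (c d : ℝ) : Prop :=
  ∃ (c' d' : ℝ) (φ : ℝ → ℝ), c' < d' ∧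
    StrictMonoOn φ (Set.Icc c' d') ∧ ContinuousOn φ (Set.Icc c' d') ∧
    φ '' Set.Icc c' d' = Set.Icc c d ∧
    (∀ u v, c' ≤ u → u ≤ v → v ≤ d' →
      eVariationOn (g ∘ φ) (Set.Icc u v) = ENNReal.ofReal (v - u)) ∧
    ∃ G' G'' : ℝ → ℝ,
      (∀ x ∈ Set.Icc c' d', HasDerivWithinAt (g ∘ φ) (G' x) (Set.Icc c' d') x) ∧
      (∀ x ∈ Set.Icc c' d', HasDerivWithinAt G' (G'' x) (Set.Icc c' d') x) ∧
      ContinuousOn G'' (Set.Icc c' d')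

/-- The singular set `D_g`. -/
def Dset (g : ℝ → ℝ) : Set ℝ :=
  {x ∈ Set.Icc (0:ℝ) 1 | ¬ ∃ c d : ℝ, c < d ∧ x ∈ Set.Ioo c d ∧
    Set.Ioo c d ⊆ Set.Icc (0:ℝ) 1 ∧ HasC2ArcLengthParam g c d}

/-- `K_f`: points of varying monotonicity — points of `[0,1]` having no open interval
neighborhood inside `[0,1]` on which `f` is constant or strictly monotone. -/
def Kset (f : ℝ → ℝ) : Set ℝ :=
  {x ∈ Set.Icc (0:ℝ) 1 | ¬ ∃ c d : ℝ, c < d ∧ x ∈ Set.Ioo c d ∧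
    Set.Ioo c d ⊆ Set.Icc (0:ℝ) 1 ∧
    ((∀ y ∈ Set.Ioo c d, f y = f x) ∨ StrictMonoOn f (Set.Ioo c d) ∨
      StrictAntiOn f (Set.Ioo c d))}

/-- `E_f`: the maximal open subset of `(0,1)` on which `f` is locally constant. -/
def Eset (f : ℝ → ℝ) : Set ℝ :=
  {x ∈ Set.Ioo (0:ℝ) 1 | ∃ c d : ℝ, c < d ∧ x ∈ Set.Ioo c d ∧
    Set.Ioo c d ⊆ Set.Ioo (0:ℝ) 1 ∧ ∀ y ∈ Set.Ioo c d, f y = f x}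

/-- For a continuous real-valued `f`: a point of `(0,1)` is outside `D_f` iff `f` is
strictly monotone on some open interval around it; moreover `D_f = K_f ∪ E_f`. -/
lemma evar_id {u v : ℝ} (huv : u ≤ v) :
    eVariationOn id (Set.Icc u v) = ENNReal.ofReal (v - u) := by
  apply le_antisymm
  · have h := (monotoneOn_id (s := Set.Icc u v)).eVariationOn_le
      (Set.left_mem_Icc.2 huv) (Set.right_mem_Icc.2 huv)
    simpa using h
  · have h := eVariationOn.edist_le (id : ℝ → ℝ) (s := Set.Icc u v)
      (Set.right_mem_Icc.2 huv) (Set.left_mem_Icc.2 huv)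
    simpa [edist_dist, Real.dist_eq, abs_of_nonneg (sub_nonneg.2 huv)] using h

lemma lip_neg : LipschitzWith 1 (Neg.neg : ℝ → ℝ) := fun x y => by
  rw [edist_neg_neg, ENNReal.coe_one, one_mul]

lemma evar_neg (F : ℝ → ℝ) (s : Set ℝ) :
    eVariationOn (fun t => -F t) s = eVariationOn F s := by
  apply le_antisymm
  · have h := LipschitzOnWith.comp_eVariationOn_le (lip_neg.lipschitzOnWith (s := Set.univ))
      (Set.mapsTo_univ F s)
    simpa [Function.comp_def] using h
  · have h := LipschitzOnWith.comp_eVariationOn_le (lip_neg.lipschitzOnWith (s := Set.univ))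
      (Set.mapsTo_univ (fun t => -F t) s)
    have he : (Neg.neg ∘ fun t => -F t) = F := by funext t; simp [Function.comp]
    rw [he] at h
    simpa using h

lemma inv_param {F : ℝ → ℝ} {a b : ℝ} (hab : a < b)
    (hmono : StrictMonoOn F (Set.Icc a b)) (hcont : ContinuousOn F (Set.Icc a b)) :
    ∃ φ : ℝ → ℝ, F a < F b ∧ StrictMonoOn φ (Set.Icc (F a) (F b)) ∧
      ContinuousOn φ (Set.Icc (F a) (F b)) ∧
      φ '' Set.Icc (F a) (F b) = Set.Icc a b ∧
      ∀ t ∈ Set.Icc (F a) (F b), F (φ t) = t := by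
  have hma : a ∈ Set.Icc a b := Set.left_mem_Icc.2 hab.le
  have hmb : b ∈ Set.Icc a b := Set.right_mem_Icc.2 hab.le
  have hFab : F a < F b := hmono hma hmb hab
  have himg : F '' Set.Icc a b = Set.Icc (F a) (F b) := by
    apply Set.Subset.antisymm
    · rintro _ ⟨z, hz, rfl⟩
      exact ⟨hmono.monotoneOn hma hz hz.1, hmono.monotoneOn hz hmb hz.2⟩
    · exact intermediate_value_Icc hab.le hcont
  let e : Set.Icc a b ≃o (Set.Icc (F a) (F b)) :=
    (hmono.orderIso F _).trans (OrderIso.setCongr _ _ himg)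
  have he : ∀ z : Set.Icc a b, (e z : ℝ) = F z := fun z => rfl
  refine ⟨fun t => (e.symm (Set.projIcc (F a) (F b) hFab.le t) : ℝ), hFab, ?_, ?_, ?_, ?_⟩
  · intro s hs t ht hst
    dsimp only
    rw [Set.projIcc_of_mem _ hs, Set.projIcc_of_mem _ ht]
    exact Subtype.coe_lt_coe.2 (e.symm.strictMono (Subtype.mk_lt_mk.2 hst))
  · exact (continuous_subtype_val.comp (e.symm.continuous.comp continuous_projIcc)).continuousOn
  · apply Set.Subset.antisymm
    · rintro _ ⟨t, ht, rfl⟩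
      exact (e.symm _).2
    · intro y hy
      refine ⟨(e ⟨y, hy⟩ : ℝ), (e ⟨y, hy⟩).2, ?_⟩
      dsimp only
      rw [Set.projIcc_val, OrderIso.symm_apply_apply]
  · intro t ht
    dsimp only
    rw [Set.projIcc_of_mem _ ht]
    have h2 := he (e.symm ⟨t, ht⟩)
    rw [OrderIso.apply_symm_apply] at h2
    exact h2.symm

lemma hasC2_of_strictMono {f : ℝ → ℝ} {a b : ℝ} (hab : a < b)
    (hcont : ContinuousOn f (Set.Icc a b))
    (h : StrictMonoOn f (Set.Icc a b) ∨ StrictAntiOn f (Set.Icc a b)) :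
    HasC2ArcLengthParam f a b := by
  rcases h with hm | hm
  · obtain ⟨φ, hFab, hφm, hφc, hφim, hφF⟩ := inv_param hab hm hcont
    have heq : Set.EqOn (f ∘ φ) id (Set.Icc (f a) (f b)) := fun t ht => hφF t ht
    refine ⟨f a, f b, φ, hFab, hφm, hφc, hφim, ?_, fun _ => 1, fun _ => 0, ?_, ?_, ?_⟩
    · intro u v hu huv hv
      rw [eVariationOn.eq_of_eqOn (heq.mono (Set.Icc_subset_Icc hu hv))]
      exact evar_id huv
    · intro x hx
      exact (hasDerivWithinAt_id x _).congr (fun y hy => heq hy) (heq hx)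
    · intro x hx
      exact hasDerivWithinAt_const x _ 1
    · exact continuousOn_const
  · have hm' : StrictMonoOn (fun y => -f y) (Set.Icc a b) :=
      fun y hy z hz hyz => neg_lt_neg (hm hy hz hyz)
    obtain ⟨φ, hFab, hφm, hφc, hφim, hφF⟩ := inv_param hab hm' hcont.neg
    have heq : Set.EqOn (f ∘ φ) (fun t => -t) (Set.Icc (-f a) (-f b)) := by
      intro t ht
      have := hφF t ht
      simp only [Function.comp_apply]
      linarith
    refine ⟨-f a, -f b, φ, hFab, hφm, hφc, hφim, ?_, fun _ => -1, fun _ => 0, ?_, ?_, ?_⟩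
    · intro u v hu huv hv
      rw [eVariationOn.eq_of_eqOn (heq.mono (Set.Icc_subset_Icc hu hv))]
      have := evar_neg (id : ℝ → ℝ) (Set.Icc u v)
      simp only [id] at this
      rw [this]
      exact evar_id huv
    · intro x hx
      exact ((hasDerivWithinAt_id x _).neg).congr (fun y hy => heq hy) (heq hx)
    · intro x hx
      exact hasDerivWithinAt_const x _ (-1)
    · exact continuousOn_const

lemma mono_of_hasC2 {g : ℝ → ℝ} {c d : ℝ} (hp : HasC2ArcLengthParam g c d) :
    StrictMonoOn g (Set.Icc c d) ∨ StrictAntiOn g (Set.Icc c d) := by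
  obtain ⟨c', d', φ, hcd', hφm, hφc, hφim, hvar, G', G'', hG', hG'', _⟩ := hp
  set h : ℝ → ℝ := g ∘ φ with hh
  have hG'cont : ContinuousOn G' (Set.Icc c' d') := fun t ht => (hG'' t ht).continuousWithinAt
  have hconth : ContinuousOn h (Set.Icc c' d') := fun t ht => (hG' t ht).continuousWithinAt
  -- h is 1-Lipschitz on [c',d']
  have edist_bound : ∀ u ∈ Set.Icc c' d', ∀ v ∈ Set.Icc c' d', u ≤ v →
      edist (h u) (h v) ≤ edist u v := by
    intro u hu v hv huv
    calc edist (h u) (h v) ≤ eVariationOn h (Set.Icc u v) :=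
          eVariationOn.edist_le h ⟨le_rfl, huv⟩ ⟨huv, le_rfl⟩
      _ = ENNReal.ofReal (v - u) := hvar u v hu.1 huv hv.2
      _ = edist u v := by
          rw [edist_dist, Real.dist_eq, abs_sub_comm, abs_of_nonneg (by linarith)]
  have hlip : LipschitzOnWith 1 h (Set.Icc c' d') := by
    intro u hu v hv
    rw [ENNReal.coe_one, one_mul]
    rcases le_total u v with huv | huv
    · exact edist_bound u hu v hv huv
    · rw [edist_comm, edist_comm u v]
      exact edist_bound v hv u hu huv
  -- key: on the interior, |G'| = 1
  have key : ∀ t ∈ Set.Ioo c' d', G' t = 1 ∨ G' t = -1 := by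
    intro t ht
    have hmem : Set.Icc c' d' ∈ 𝓝 t := Icc_mem_nhds ht.1 ht.2
    have htI : t ∈ Set.Icc c' d' := Set.Ioo_subset_Icc_self ht
    have hda : HasDerivAt h (G' t) t := (hG' t htI).hasDerivAt hmem
    have hub : |G' t| ≤ 1 := by
      have h1 := hda.le_of_lipschitzOn hmem hlip
      simpa [Real.norm_eq_abs] using h1
    have hlb : ¬ |G' t| < 1 := by
      intro hlt
      set K : ℝ := (1 + |G' t|) / 2 with hK
      have hK1 : K < 1 := by simp only [hK]; linarith
      have hK0 : 0 ≤ K := by positivity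
      have hcw : ContinuousWithinAt G' (Set.Icc c' d') t := hG'cont t htI
      rw [Metric.continuousWithinAt_iff] at hcw
      obtain ⟨δ, hδ, hball⟩ := hcw (K - |G' t|) (by linarith)
      set u : ℝ := max c' (t - δ / 2) with hu
      set v : ℝ := min d' (t + δ / 2) with hv
      have huv : u < v := by
        apply max_lt <;> apply lt_min <;> [exact hcd'; skip; skip; skip] <;> linarith [ht.1, ht.2]
      have hsub : Set.Icc u v ⊆ Set.Icc c' d' :=
        Set.Icc_subset_Icc (le_max_left _ _) (min_le_left _ _)
      have hGK : ∀ s ∈ Set.Icc u v, ‖G' s‖ ≤ K := by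
        intro s hs
        have hds : dist s t < δ := by
          rw [Real.dist_eq, abs_sub_lt_iff]
          constructor
          · have := hs.2.trans (min_le_right _ _); linarith
          · have := (le_max_right c' (t - δ/2)).trans hs.1; linarith
        have := hball (hsub hs) hds
        rw [Real.dist_eq] at this
        rw [Real.norm_eq_abs]
        calc |G' s| ≤ |G' s - G' t| + |G' t| := by
              have := abs_add_le (G' s - G' t) (G' t); simpa using this
          _ ≤ K := by linarith
      have hd2 : ∀ s ∈ Set.Icc u v, HasDerivWithinAt h (G' s) (Set.Icc u v) s :=
        fun s hs => (hG' s (hsub hs)).mono hsub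
      have hlipK : LipschitzOnWith (Real.toNNReal K) h (Set.Icc u v) := by
        rw [lipschitzOnWith_iff_dist_le_mul]
        intro x hx y hy
        have := (convex_Icc u v).norm_image_sub_le_of_norm_hasDerivWithin_le hd2 hGK hy hx
        rw [Real.coe_toNNReal _ hK0]
        simpa [Real.dist_eq, Real.norm_eq_abs, abs_sub_comm] using this
      have hvarle := hlipK.comp_eVariationOn_le (Set.mapsTo_id (Set.Icc u v))
      rw [Function.comp_id] at hvarle
      have hid : eVariationOn id (Set.Icc u v) = ENNReal.ofReal (v - u) := evar_id huv.le
      rw [hid, hvar u v (le_max_left _ _) huv.le (min_le_left _ _)] at hvarle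
      have hco : (Real.toNNReal K : ENNReal) = ENNReal.ofReal K := rfl
      rw [hco, ← ENNReal.ofReal_mul hK0] at hvarle
      have hle : v - u ≤ K * (v - u) := by
        have h0 : 0 ≤ K * (v - u) := by nlinarith
        exact (ENNReal.ofReal_le_ofReal_iff h0).1 hvarle
      nlinarith
    have habs : |G' t| = 1 := le_antisymm hub (not_lt.1 hlb)
    rcases (abs_eq (by norm_num : (0:ℝ) ≤ 1)).1 habs with h1 | h1
    · exact Or.inl h1
    · exact Or.inr h1
  -- constant sign
  have ivt : ∀ p ∈ Set.Ioo c' d', ∀ q ∈ Set.Ioo c' d', G' p = 1 → G' q = -1 → False := by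
    intro p hp q hq h1 h2
    have main : ∀ r s : ℝ, r ∈ Set.Ioo c' d' → s ∈ Set.Ioo c' d' → r ≤ s →
        (0:ℝ) ∈ Set.Icc (G' s) (G' r) ∪ Set.Icc (G' r) (G' s) → False := by
      intro r s hr hs hrs h0
      have hsub : Set.Icc r s ⊆ Set.Ioo c' d' :=
        fun z hz => ⟨lt_of_lt_of_le hr.1 hz.1, lt_of_le_of_lt hz.2 hs.2⟩
      have hcont' : ContinuousOn G' (Set.Icc r s) :=
        hG'cont.mono (hsub.trans Set.Ioo_subset_Icc_self)
      rcases h0 with h0 | h0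
      · obtain ⟨z, hz, hz0⟩ := intermediate_value_Icc' hrs hcont' h0
        rcases key z (hsub hz) with h | h <;> rw [hz0] at h <;> norm_num at h
      · obtain ⟨z, hz, hz0⟩ := intermediate_value_Icc hrs hcont' h0
        rcases key z (hsub hz) with h | h <;> rw [hz0] at h <;> norm_num at h
    rcases le_total p q with hpq | hpq
    · exact main p q hp hq hpq (by rw [h1, h2]; left; constructor <;> norm_num)
    · exact main q p hq hp hpq (by rw [h1, h2]; right; constructor <;> norm_num)
  have hsign : (∀ t ∈ Set.Ioo c' d', G' t = 1) ∨ (∀ t ∈ Set.Ioo c' d', G' t = -1) := by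
    have hmmem : (c' + d') / 2 ∈ Set.Ioo c' d' := ⟨by linarith, by linarith⟩
    rcases key _ hmmem with h1 | h1
    · left
      intro t ht
      rcases key t ht with h2 | h2
      · exact h2
      · exact absurd (ivt _ hmmem _ ht h1 h2) (not_false)
    · right
      intro t ht
      rcases key t ht with h2 | h2
      · exact absurd (ivt _ ht _ hmmem h2 h1) (not_false)
      · exact h2
  have deriv_eq : ∀ t ∈ Set.Ioo c' d', deriv h t = G' t := by
    intro t ht
    exact ((hG' t (Set.Ioo_subset_Icc_self ht)).hasDerivAt (Icc_mem_nhds ht.1 ht.2)).deriv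
  rcases hsign with hs1 | hs1
  · left
    have hmono : StrictMonoOn h (Set.Icc c' d') := by
      apply strictMonoOn_of_deriv_pos (convex_Icc c' d') hconth
      intro t ht
      rw [interior_Icc] at ht
      rw [deriv_eq t ht, hs1 t ht]
      norm_num
    intro y1 hy1 y2 hy2 h12
    rw [← hφim] at hy1 hy2
    obtain ⟨t1, ht1, rfl⟩ := hy1
    obtain ⟨t2, ht2, rfl⟩ := hy2
    have ht12 : t1 < t2 := by
      by_contra hle
      push_neg at hle
      exact absurd h12 (not_lt.2 (hφm.monotoneOn ht2 ht1 hle))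
    exact hmono ht1 ht2 ht12
  · right
    have hanti : StrictAntiOn h (Set.Icc c' d') := by
      apply strictAntiOn_of_deriv_neg (convex_Icc c' d') hconth
      intro t ht
      rw [interior_Icc] at ht
      rw [deriv_eq t ht, hs1 t ht]
      norm_num
    intro y1 hy1 y2 hy2 h12
    rw [← hφim] at hy1 hy2
    obtain ⟨t1, ht1, rfl⟩ := hy1
    obtain ⟨t2, ht2, rfl⟩ := hy2
    have ht12 : t1 < t2 := by
      by_contra hle
      push_neg at hle
      exact absurd h12 (not_lt.2 (hφm.monotoneOn ht2 ht1 hle))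
    exact hanti ht1 ht2 ht12

lemma mem_Ioo01 {c d x : ℝ} (hx : x ∈ Set.Ioo c d)
    (hsub : Set.Ioo c d ⊆ Set.Icc 0 1) : x ∈ Set.Ioo (0:ℝ) 1 := by
  obtain ⟨hcx, hxd⟩ := hx
  have h1 : (c + x) / 2 ∈ Set.Ioo c d := ⟨by linarith, by linarith⟩
  have h2 : (x + d) / 2 ∈ Set.Ioo c d := ⟨by linarith, by linarith⟩
  have := hsub h1
  have := hsub h2
  constructor
  · have := (hsub h1).1; linarith
  · have := (hsub h2).2; linarith

theorem stmt_17 (f : ℝ → ℝ) (hf : ContinuousOn f (Set.Icc 0 1)) :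
    (∀ x ∈ Set.Ioo (0:ℝ) 1,
      (x ∉ Dset f ↔ ∃ c d : ℝ, c < d ∧ x ∈ Set.Ioo c d ∧
        Set.Ioo c d ⊆ Set.Icc (0:ℝ) 1 ∧
        (StrictMonoOn f (Set.Ioo c d) ∨ StrictAntiOn f (Set.Ioo c d)))) ∧
    Dset f = Kset f ∪ Eset f := by
  have part1 : ∀ x ∈ Set.Ioo (0:ℝ) 1,
      (x ∉ Dset f ↔ ∃ c d : ℝ, c < d ∧ x ∈ Set.Ioo c d ∧
        Set.Ioo c d ⊆ Set.Icc (0:ℝ) 1 ∧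
        (StrictMonoOn f (Set.Ioo c d) ∨ StrictAntiOn f (Set.Ioo c d))) := by
    intro x hxo
    have hxI : x ∈ Set.Icc (0:ℝ) 1 := ⟨hxo.1.le, hxo.2.le⟩
    constructor
    · intro hnd
      have hex : ∃ c d : ℝ, c < d ∧ x ∈ Set.Ioo c d ∧
          Set.Ioo c d ⊆ Set.Icc (0:ℝ) 1 ∧ HasC2ArcLengthParam f c d := by
        by_contra hne
        exact hnd ⟨hxI, hne⟩
      obtain ⟨c, d, hcd, hxcd, hsub, hC2⟩ := hex
      refine ⟨c, d, hcd, hxcd, hsub, ?_⟩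
      rcases mono_of_hasC2 hC2 with hm | hm
      · exact Or.inl (hm.mono Set.Ioo_subset_Icc_self)
      · exact Or.inr (hm.mono Set.Ioo_subset_Icc_self)
    · rintro ⟨c, d, hcd, hxcd, hsub, hm⟩ hD
      set a : ℝ := (c + x) / 2 with ha
      set b : ℝ := (x + d) / 2 with hb
      have hab : a < b := by simp only [ha, hb]; rcases hxcd with ⟨h1, h2⟩; linarith
      have hIab : Set.Icc a b ⊆ Set.Ioo c d := by
        intro y hy
        rcases hxcd with ⟨h1, h2⟩
        constructor
        · have := hy.1; simp only [ha] at this ⊢; linarith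
        · have := hy.2; simp only [hb] at this ⊢; linarith
      have hcont : ContinuousOn f (Set.Icc a b) := hf.mono (hIab.trans hsub)
      have hm' : StrictMonoOn f (Set.Icc a b) ∨ StrictAntiOn f (Set.Icc a b) := by
        rcases hm with hm | hm
        · exact Or.inl (hm.mono hIab)
        · exact Or.inr (hm.mono hIab)
      have hxab : x ∈ Set.Ioo a b := by
        rcases hxcd with ⟨h1, h2⟩
        exact ⟨by simp only [ha]; linarith, by simp only [hb]; linarith⟩
      exact hD.2 ⟨a, b, hab, hxab, (Set.Ioo_subset_Icc_self.trans hIab).trans hsub,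
        hasC2_of_strictMono hab hcont hm'⟩
  refine ⟨part1, ?_⟩
  ext x
  simp only [Set.mem_union]
  constructor
  · intro hxD
    have hxI : x ∈ Set.Icc (0:ℝ) 1 := hxD.1
    by_cases hxo : x ∈ Set.Ioo (0:ℝ) 1
    · have hno : ¬ ∃ c d : ℝ, c < d ∧ x ∈ Set.Ioo c d ∧
          Set.Ioo c d ⊆ Set.Icc (0:ℝ) 1 ∧
          (StrictMonoOn f (Set.Ioo c d) ∨ StrictAntiOn f (Set.Ioo c d)) :=
        fun hyp => (part1 x hxo).mpr hyp hxD
      by_cases hxK : x ∈ Kset f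
      · exact Or.inl hxK
      · right
        have hex : ∃ c d : ℝ, c < d ∧ x ∈ Set.Ioo c d ∧
            Set.Ioo c d ⊆ Set.Icc (0:ℝ) 1 ∧
            ((∀ y ∈ Set.Ioo c d, f y = f x) ∨ StrictMonoOn f (Set.Ioo c d) ∨
              StrictAntiOn f (Set.Ioo c d)) := by
          by_contra hne
          exact hxK ⟨hxI, hne⟩
        obtain ⟨c, d, hcd, hxcd, hsub, hcase⟩ := hex
        rcases hcase with hconst | hm | hm
        · set c₂ : ℝ := max c (x / 2) with hc₂
          set d₂ : ℝ := min d ((x + 1) / 2) with hd₂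
          have hxc₂ : c₂ < x := by
            apply max_lt hxcd.1
            linarith [hxo.1]
          have hxd₂ : x < d₂ := by
            apply lt_min hxcd.2
            linarith [hxo.2]
          refine ⟨hxo, c₂, d₂, hxc₂.trans hxd₂, ⟨hxc₂, hxd₂⟩, ?_, ?_⟩
          · intro y hy
            constructor
            · have h1 : x / 2 ≤ c₂ := le_max_right _ _
              have := hy.1
              have hx0 := hxo.1
              linarith
            · have h1 : d₂ ≤ (x + 1) / 2 := min_le_right _ _
              have := hy.2
              have hx1 := hxo.2
              linarith
          · intro y hy
            apply hconst
            exact ⟨lt_of_le_of_lt (le_max_left _ _) hy.1, lt_of_lt_of_le hy.2 (min_le_left _ _)⟩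
        · exact absurd ⟨c, d, hcd, hxcd, hsub, Or.inl hm⟩ hno
        · exact absurd ⟨c, d, hcd, hxcd, hsub, Or.inr hm⟩ hno
    · left
      exact ⟨hxI, fun ⟨c, d, hcd, hxcd, hsub, _⟩ => hxo (mem_Ioo01 hxcd hsub)⟩
  · rintro (hK | hE)
    · refine ⟨hK.1, ?_⟩
      rintro ⟨c, d, hcd, hxcd, hsub, hC2⟩
      apply hK.2
      refine ⟨c, d, hcd, hxcd, hsub, ?_⟩
      rcases mono_of_hasC2 hC2 with hm | hm
      · exact Or.inr (Or.inl (hm.mono Set.Ioo_subset_Icc_self))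
      · exact Or.inr (Or.inr (hm.mono Set.Ioo_subset_Icc_self))
    · obtain ⟨hxo, c, d, hcd, hxcd, hsub01, hconst⟩ := hE
      refine ⟨⟨hxo.1.le, hxo.2.le⟩, ?_⟩
      rintro ⟨c₁, d₁, hcd₁, hx₁, hsub₁, hC2⟩
      set u : ℝ := max c c₁ with hu
      have hux : u < x := max_lt hxcd.1 hx₁.1
      set y₁ : ℝ := (u + x) / 2 with hy₁
      have hy₁x : y₁ < x := by simp only [hy₁]; linarith
      have hy₁cd : y₁ ∈ Set.Ioo c d := by
        constructor
        · have : c ≤ u := le_max_left _ _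
          simp only [hy₁]; linarith
        · exact hy₁x.trans hxcd.2
      have hy₁I : y₁ ∈ Set.Icc c₁ d₁ := by
        constructor
        · have : c₁ ≤ u := le_max_right _ _
          simp only [hy₁]; linarith
        · exact (hy₁x.trans hx₁.2).le
      have hxI₁ : x ∈ Set.Icc c₁ d₁ := ⟨hx₁.1.le, hx₁.2.le⟩
      have hfeq : f y₁ = f x := hconst y₁ hy₁cd
      rcases mono_of_hasC2 hC2 with hm | hm
      · have := hm hy₁I hxI₁ hy₁x
        rw [hfeq] at this
        exact lt_irrefl _ this
      · have := hm hy₁I hxI₁ hy₁x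
        rw [hfeq] at this
        exact lt_irrefl _ this
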